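/- Let V be a regular scheme, X = A^n_V = Spec(O_V[x_1,...,x_n]), and J = (x_1^{1/w_1},...,x_k^{1/w_k}) a weighted center. Let I ⊆ O_V[x_1,...,x_n] be an ideal homogeneous with respect to the grading deg(x_i) = w_i for i ≤ k, deg(x_i) = 0 for i > k. Then the full cobordant blow-up B of X at J is isomorphic over V to Y = X × A^1 via x_i ↦ t^{w_i} x_i (i ≤ k), x_i ↦ x_i (i > k), y ↦ t^{-1}; and this isomorphism takes O_Y · I to the strict transform σ^s(I) and V(x_1,...,x_n) ⊂ Y to the vertex of B. -/

import Mathlib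

open LaurentPolynomial MvPolynomial

namespace CobordantAux

variable {S : Type*} [CommRing S] {n : ℕ} (w : Fin n → ℕ)

lemma aeval_monomial_eq (α : Fin n →₀ ℕ) (c : S) :
    aeval (fun i : Fin n => LaurentPolynomial.C (X i : MvPolynomial (Fin n) S) * T (w i))
      (monomial α c) =
    LaurentPolynomial.C (monomial α c : MvPolynomial (Fin n) S) *
      T ((Finsupp.weight w α : ℕ) : ℤ) := by
  induction α using Finsupp.induction with
  | zero =>
      rw [map_zero, monomial_zero', aeval_C, Int.ofNat_zero, T_zero, mul_one,
        LaurentPolynomial.algebraMap_apply, MvPolynomial.algebraMap_eq]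
  | single_add i k β hi hk ih =>
      rw [monomial_single_add, map_mul, map_pow, aeval_X, ih, mul_pow, ← map_pow, T_pow]
      have hw : (Finsupp.weight w) (Finsupp.single i k + β) = k * w i + Finsupp.weight w β := by
        rw [map_add]
        simp [Finsupp.weight_apply, Finsupp.sum_single_index, mul_comm]
      rw [mul_mul_mul_comm, ← map_mul, ← T_add, hw]
      push_cast
      try ring

lemma aeval_weighted_homogeneous {g : MvPolynomial (Fin n) S} {m : ℕ}
    (hg : g.IsWeightedHomogeneous w m) :
    aeval (fun i : Fin n => LaurentPolynomial.C (X i : MvPolynomial (Fin n) S) * T (w i)) g =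
    LaurentPolynomial.C g * T (m : ℤ) := by
  conv_lhs => rw [← support_sum_monomial_coeff g]
  rw [map_sum]
  have : ∀ α ∈ g.support,
      aeval (fun i : Fin n => LaurentPolynomial.C (X i : MvPolynomial (Fin n) S) * T (w i))
        (monomial α (coeff α g)) =
      LaurentPolynomial.C (monomial α (coeff α g) : MvPolynomial (Fin n) S) * T (m : ℤ) := by
    intro α hα
    rw [aeval_monomial_eq, hg (mem_support_iff.mp hα)]
  rw [Finset.sum_congr rfl this, ← Finset.sum_mul, ← map_sum, support_sum_monomial_coeff]


/-- The generating set of the cobordant blow-up algebra. -/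
def gens : Set (LaurentPolynomial (MvPolynomial (Fin n) S)) :=
  insert (T (-1))
    (Set.range fun i : Fin n => LaurentPolynomial.C (X i : MvPolynomial (Fin n) S) * T (w i))

lemma T_neg_one_pow (R : Type*) [Semiring R] (k : ℕ) :
    (T (-1) : LaurentPolynomial R) ^ k = T (-(k : ℤ)) := by
  rw [T_pow, mul_neg_one]

lemma C_mem_adjoin (g : MvPolynomial (Fin n) S) :
    LaurentPolynomial.C g ∈ Algebra.adjoin S (gens w) := by
  induction g using MvPolynomial.induction_on with
  | C s =>
      rw [← MvPolynomial.algebraMap_eq, ← LaurentPolynomial.algebraMap_apply]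
      exact Subalgebra.algebraMap_mem _ s
  | add p q hp hq => rw [map_add]; exact add_mem hp hq
  | mul_X p i hp =>
      rw [map_mul]
      refine mul_mem hp ?_
      have key : LaurentPolynomial.C (X i : MvPolynomial (Fin n) S) =
          (LaurentPolynomial.C (X i : MvPolynomial (Fin n) S) * T (w i)) * T (-1) ^ (w i) := by
        rw [T_neg_one_pow, mul_assoc, ← T_add, add_neg_cancel, T_zero, mul_one]
      rw [key]
      exact mul_mem (Algebra.subset_adjoin (Set.mem_insert_of_mem _ ⟨i, rfl⟩))
        (pow_mem (Algebra.subset_adjoin (Set.mem_insert _ _)) _)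

lemma aeval_mem_adjoin (p : MvPolynomial (Fin n) S) :
    aeval (fun i : Fin n => LaurentPolynomial.C (X i : MvPolynomial (Fin n) S) * T (w i)) p ∈
      Algebra.adjoin S (gens w) := by
  have h1 : aeval (fun i : Fin n =>
      LaurentPolynomial.C (X i : MvPolynomial (Fin n) S) * T (w i)) p ∈
      Algebra.adjoin S (Set.range fun i : Fin n =>
        LaurentPolynomial.C (X i : MvPolynomial (Fin n) S) * T (w i)) := by
    rw [Algebra.adjoin_range_eq_range_aeval]
    exact ⟨p, rfl⟩
  exact Algebra.adjoin_mono (Set.subset_insert _ _) h1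

lemma mem_adjoin_coeff_support {f : LaurentPolynomial (MvPolynomial (Fin n) S)}
    (hf : f ∈ Algebra.adjoin S (gens w)) (d : ℤ) (α : Fin n →₀ ℕ) (hα : α ∈ (f.coeff d).support) :
    d ≤ ((Finsupp.weight w α : ℕ) : ℤ) := by
  classical
  induction hf using Algebra.adjoin_induction generalizing d α with
  | mem x hx =>
      rcases hx with h | ⟨i, rfl⟩
      · subst h
        rw [T_apply] at hα
        split_ifs at hα with h1
        · have h0 : α = 0 := by
            have h2 := MvPolynomial.mem_support_iff.mp hα
            rw [MvPolynomial.coeff_one] at h2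
            by_contra hne
            exact h2 (if_neg (fun h => hne h.symm))
          subst h0
          rw [map_zero]
          omega
        · simp at hα
      · simp only [← single_eq_C_mul_T, AddMonoidAlgebra.coeff_single_apply] at hα
        split_ifs at hα with h1
        · have h0 : α = Finsupp.single i 1 := by
            have h2 := MvPolynomial.support_monomial_subset hα
            exact Finset.mem_singleton.mp h2
          subst h0
          have hw : Finsupp.weight w (Finsupp.single i 1) = w i := by
            simp [Finsupp.weight_apply, Finsupp.sum_single_index]
          rw [hw, ← h1]
        · simp at hα
  | algebraMap s =>
      rw [LaurentPolynomial.algebraMap_apply, LaurentPolynomial.C_apply] at hα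
      split_ifs at hα with h1
      · have h0 : α = 0 := by
          have h2 := MvPolynomial.mem_support_iff.mp hα
          rw [MvPolynomial.algebraMap_eq] at h2
          classical
          rw [MvPolynomial.coeff_C] at h2
          by_contra hne
          exact h2 (if_neg (fun h => hne h.symm))
        subst h0
        rw [map_zero]
        omega
      · simp at hα
  | add x y hx hy ihx ihy =>
      rw [AddMonoidAlgebra.coeff_add, Finsupp.add_apply] at hα
      rcases Finset.mem_union.mp (MvPolynomial.support_add hα) with h | h
      · exact ihx d α h
      · exact ihy d α h
  | mul x y hx hy ihx ihy =>
      rw [AddMonoidAlgebra.coeff_mul] at hα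
      obtain ⟨a₁, ha₁, hα1⟩ := Finset.mem_biUnion.mp (MvPolynomial.support_sum hα)
      obtain ⟨a₂, ha₂, hα2⟩ := Finset.mem_biUnion.mp (MvPolynomial.support_sum hα1)
      simp only at hα2
      split_ifs at hα2 with hsum
      · obtain ⟨β, hβ, γ, hγ, rfl⟩ := Finset.mem_add.mp (MvPolynomial.support_mul _ _ hα2)
        have e1 := ihx a₁ β hβ
        have e2 := ihy a₂ γ hγ
        rw [map_add, Nat.cast_add]
        omega
      · simp at hα2


lemma C_mul_T_mem (d : ℤ) (c : MvPolynomial (Fin n) S)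
    (h : ∀ α ∈ c.support, d ≤ ((Finsupp.weight w α : ℕ) : ℤ)) :
    LaurentPolynomial.C c * T d ∈ Algebra.adjoin S (gens w) := by
  have hsum : LaurentPolynomial.C c * T d =
      ∑ α ∈ c.support, LaurentPolynomial.C (monomial α (coeff α c)) * T d := by
    rw [← Finset.sum_mul, ← map_sum, support_sum_monomial_coeff]
  rw [hsum]
  refine Subalgebra.sum_mem _ fun α hα => ?_
  have hd := h α hα
  have key : LaurentPolynomial.C (monomial α (coeff α c)) * T d =
      aeval (fun i : Fin n => LaurentPolynomial.C (X i : MvPolynomial (Fin n) S) * T (w i))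
        (monomial α (coeff α c)) *
        T (-1) ^ (((Finsupp.weight w α : ℕ) : ℤ) - d).toNat := by
    rw [aeval_monomial_eq, T_neg_one_pow, Int.toNat_of_nonneg (by omega), mul_assoc, ← T_add]
    congr 2
    omega
  rw [key]
  exact mul_mem (aeval_mem_adjoin w _) (pow_mem (Algebra.subset_adjoin (Set.mem_insert _ _)) _)

/-- `T` as a monoid hom from `Multiplicative ℤ`. -/
noncomputable def Tmh (R : Type*) [Semiring R] : Multiplicative ℤ →* LaurentPolynomial R where
  toFun z := T z.toAdd
  map_one' := T_zero
  map_mul' x y := T_add x.toAdd y.toAdd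

/-- Map on Laurent polynomials induced by a ring hom on coefficients. -/
noncomputable def lmap {R R' : Type*} [CommSemiring R] [CommSemiring R'] (π : R →+* R') :
    LaurentPolynomial R →+* LaurentPolynomial R' :=
  AddMonoidAlgebra.liftNCRingHom (LaurentPolynomial.C.comp π) (Tmh R')
    fun _ _ => Commute.all _ _

lemma lmap_single {R R' : Type*} [CommSemiring R] [CommSemiring R'] (π : R →+* R')
    (d : ℤ) (r : R) :
    lmap π (AddMonoidAlgebra.single d r) = LaurentPolynomial.C (π r) * T d :=
  AddMonoidAlgebra.liftNC_single _ _ _ _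

lemma lmap_apply {R R' : Type*} [CommSemiring R] [CommSemiring R'] (π : R →+* R')
    (f : LaurentPolynomial R) (d : ℤ) :
    (lmap π f).coeff d = π (f.coeff d) := by
  induction f using AddMonoidAlgebra.induction with
  | zero => rw [map_zero]; simp
  | single_add a b g ha hb ih =>
      rw [map_add, lmap_single, ← single_eq_C_mul_T, AddMonoidAlgebra.coeff_add, Finsupp.add_apply, AddMonoidAlgebra.coeff_add, Finsupp.add_apply,
        AddMonoidAlgebra.coeff_single_apply, AddMonoidAlgebra.coeff_single_apply, ih, map_add]
      split_ifs
      · rfl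
      · rw [map_zero]

/-- The retraction used to prove injectivity. -/
noncomputable def chi : LaurentPolynomial (MvPolynomial (Fin n) S) →+*
    LaurentPolynomial (MvPolynomial (Fin n) S) :=
  AddMonoidAlgebra.liftNCRingHom
    (aeval fun i : Fin n =>
      LaurentPolynomial.C (X i : MvPolynomial (Fin n) S) * T (-(w i : ℤ)) :
        MvPolynomial (Fin n) S →ₐ[S] LaurentPolynomial (MvPolynomial (Fin n) S)).toRingHom
    (Tmh _) fun _ _ => Commute.all _ _

lemma chi_single (d : ℤ) (r : MvPolynomial (Fin n) S) :
    chi w (AddMonoidAlgebra.single d r) =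
      aeval (fun i : Fin n =>
        LaurentPolynomial.C (X i : MvPolynomial (Fin n) S) * T (-(w i : ℤ))) r * T d :=
  AddMonoidAlgebra.liftNC_single _ _ _ _

/-- The standard embedding `x_i ↦ C x_i`, `y ↦ T⁻¹`. -/
noncomputable def iota : MvPolynomial (Fin (n + 1)) S →ₐ[S]
    LaurentPolynomial (MvPolynomial (Fin n) S) :=
  aeval fun j : Fin (n + 1) => Fin.lastCases (T (-1))
    (fun i : Fin n => LaurentPolynomial.C (X i : MvPolynomial (Fin n) S)) j

lemma iota_injective : Function.Injective (iota (S := S) (n := n)) := by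
  have hfse : ∀ s : S, (finSuccEquiv S n) (MvPolynomial.C s) =
      Polynomial.C (MvPolynomial.C s) := by
    intro s
    rw [← MvPolynomial.algebraMap_eq, AlgEquiv.commutes, Polynomial.algebraMap_apply,
      MvPolynomial.algebraMap_eq]
  have key : ∀ p : MvPolynomial (Fin (n + 1)) S, (iota (S := S) (n := n)) p =
      LaurentPolynomial.invert
        (Polynomial.toLaurent ((finSuccEquiv S n) ((rename (finRotate (n + 1))) p))) := by
    intro p
    induction p using MvPolynomial.induction_on with
    | C s =>
        rw [iota, aeval_C, rename_C, hfse, Polynomial.toLaurent_C, invert_C,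
          LaurentPolynomial.algebraMap_apply, MvPolynomial.algebraMap_eq]
    | add p q hp hq => rw [map_add, map_add, map_add, map_add, map_add, hp, hq]
    | mul_X p j hp =>
        rw [map_mul, map_mul, map_mul, map_mul, map_mul, hp]
        congr 1
        rw [iota, aeval_X, rename_X, finRotate_succ_apply]
        induction j using Fin.lastCases with
        | last =>
            rw [Fin.lastCases_last,
              show (Fin.last n + 1 : Fin (n + 1)) = 0 by
                rw [← finRotate_succ_apply, finRotate_last],
              finSuccEquiv_X_zero, Polynomial.toLaurent_X, invert_T]
        | cast i =>
            rw [Fin.lastCases_castSucc, Fin.coeSucc_eq_succ, finSuccEquiv_X_succ,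
              Polynomial.toLaurent_C, invert_C]
  intro a b hab
  apply rename_injective _ (finRotate (n + 1)).injective
  apply (finSuccEquiv S n).injective
  apply Polynomial.toLaurent_injective
  apply AlgEquiv.injective (LaurentPolynomial.invert (R := MvPolynomial (Fin n) S))
  rw [← key, ← key, hab]

lemma single_finset_sum' {R ι : Type*} [Semiring R] (s : Finset ι) (d : ℤ) (f : ι → R) :
    ∑ i ∈ s, (AddMonoidAlgebra.single d (f i) : LaurentPolynomial R) =
      AddMonoidAlgebra.single d (∑ i ∈ s, f i) :=
  (map_sum (AddMonoidAlgebra.singleAddHom d) f s).symm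

end CobordantAux

open CobordantAux in
set_option maxHeartbeats 1000000 in
set_option synthInstance.maxHeartbeats 1000000 in
/-- Let `V` be a (regular) affine base, `X = 𝔸ⁿ_V` with coordinate ring
`P = O_V[x₁,…,xₙ]`, and `J = (x₁^{1/w₁},…,xₙ^{1/wₙ})` a weighted center.  Let
`I ⊆ P` be an ideal which is homogeneous for the grading `deg xᵢ = wᵢ`.  Then the full
cobordant blow-up `B`, with coordinate ring
`O_B = O_V[t⁻¹, x₁ t^{w₁},…,xₙ t^{wₙ}] ⊆ P[t,t⁻¹]`, is isomorphic over `V` to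
`Y = X × 𝔸¹`, via the `O_V`-algebra map `Φ` with `Φ(xᵢ) = xᵢ t^{wᵢ}` and `Φ(y) = t⁻¹`:
`Φ` is bijective, it carries `O_Y·I` onto the strict transform
`σˢ(I) = ({tᵃ f ∈ O_B : f ∈ O_B·I, a ≥ 0})`, and it carries the ideal of
`V(x₁,…,xₙ) ⊆ Y` onto the ideal of the vertex `V(x₁t^{w₁},…,xₙt^{wₙ})` of `B`. -/
theorem homogeneous_cobordant_blowup_trivializes
    {S : Type*} [CommRing S] (n : ℕ) (w : Fin n → ℕ)
    (I : Ideal (MvPolynomial (Fin n) S))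
    (hhom : ∀ f ∈ I, ∀ m : ℕ, weightedHomogeneousComponent w m f ∈ I)
    (OB : Subalgebra S (LaurentPolynomial (MvPolynomial (Fin n) S)))
    (hOB : OB = Algebra.adjoin S
      (insert (T (-1))
        (Set.range fun i : Fin n => LaurentPolynomial.C (X i : MvPolynomial (Fin n) S) * T (w i))))
    (Φ : MvPolynomial (Fin (n + 1)) S →ₐ[S] OB)
    (hΦx : ∀ i : Fin n, (Φ (X i.castSucc) : LaurentPolynomial (MvPolynomial (Fin n) S)) =
      LaurentPolynomial.C (X i : MvPolynomial (Fin n) S) * T (w i))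
    (hΦy : (Φ (X (Fin.last n)) : LaurentPolynomial (MvPolynomial (Fin n) S)) = T (-1)) :
    Function.Bijective Φ ∧
    Ideal.map Φ (Ideal.map (rename (Fin.castSucc : Fin n → Fin (n + 1))) I) =
      Ideal.span {x : OB | ∃ (a : ℕ) (y : OB),
        y ∈ Ideal.span {z : OB | ∃ g ∈ I,
          (z : LaurentPolynomial (MvPolynomial (Fin n) S)) = LaurentPolynomial.C g} ∧
        (x : LaurentPolynomial (MvPolynomial (Fin n) S)) =
          T (a : ℤ) * (y : LaurentPolynomial (MvPolynomial (Fin n) S))} ∧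
    Ideal.map Φ (Ideal.span (Set.range fun i : Fin n =>
        (X i.castSucc : MvPolynomial (Fin (n + 1)) S))) =
      Ideal.span {x : OB | ∃ i : Fin n,
        (x : LaurentPolynomial (MvPolynomial (Fin n) S)) =
          LaurentPolynomial.C (X i : MvPolynomial (Fin n) S) * T (w i)} := by
  classical
  subst hOB
  revert Φ
  set A := Algebra.adjoin S
      (insert (T (-1))
        (Set.range fun i : Fin n =>
          LaurentPolynomial.C (X i : MvPolynomial (Fin n) S) * T (w i))) with hA
  have hAgens : A = Algebra.adjoin S (gens w) := rfl
  intro Φ hΦx hΦy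
  -- the composite algebra map into the Laurent polynomial ring
  set Ψ : MvPolynomial (Fin (n + 1)) S →ₐ[S] LaurentPolynomial (MvPolynomial (Fin n) S) :=
    A.val.comp Φ with hΨdef
  have hΨval : ∀ p, Ψ p = ((Φ p : A) : LaurentPolynomial (MvPolynomial (Fin n) S)) :=
    fun _ => rfl
  have hΨx : ∀ i : Fin n, Ψ (X i.castSucc) =
      LaurentPolynomial.C (X i : MvPolynomial (Fin n) S) * T (w i) := fun i => hΦx i
  have hΨy : Ψ (X (Fin.last n)) = T (-1) := hΦy
  have hΨrename : ∀ h : MvPolynomial (Fin n) S,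
      Ψ (rename (Fin.castSucc : Fin n → Fin (n + 1)) h) =
      aeval (fun i : Fin n =>
        LaurentPolynomial.C (X i : MvPolynomial (Fin n) S) * T (w i)) h := by
    intro h
    rw [show Ψ (rename (Fin.castSucc : Fin n → Fin (n + 1)) h) =
        (Ψ.comp (rename (Fin.castSucc : Fin n → Fin (n + 1)))) h from rfl]
    congr 1
    apply MvPolynomial.algHom_ext
    intro i
    rw [AlgHom.comp_apply, rename_X, aeval_X, hΨx]
  -- injectivity
  have hcomp : ∀ p : MvPolynomial (Fin (n + 1)) S, chi w (Ψ p) = iota p := by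
    intro p
    induction p using MvPolynomial.induction_on with
    | C s =>
        rw [← MvPolynomial.algebraMap_eq, AlgHom.commutes, AlgHom.commutes,
          LaurentPolynomial.algebraMap_apply, ← single_eq_C, chi_single, AlgHom.commutes,
          T_zero, mul_one, LaurentPolynomial.algebraMap_apply, single_eq_C]
    | add p q hp hq => rw [map_add, map_add, map_add, hp, hq]
    | mul_X p j hp =>
        rw [map_mul, map_mul, map_mul, hp]
        congr 1
        induction j using Fin.lastCases with
        | last =>
            rw [hΨy, show (T (-1) : LaurentPolynomial (MvPolynomial (Fin n) S)) =
                AddMonoidAlgebra.single (-1 : ℤ) (1 : MvPolynomial (Fin n) S) from rfl,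
              chi_single, map_one, one_mul, iota, aeval_X, Fin.lastCases_last]
        | cast i =>
            rw [hΨx i, ← single_eq_C_mul_T, chi_single, aeval_X, mul_assoc, ← T_add,
              neg_add_cancel, T_zero, mul_one, iota, aeval_X, Fin.lastCases_castSucc]
  have hΨinj : Function.Injective Ψ := by
    intro a b hab
    exact iota_injective (by rw [← hcomp, ← hcomp, hab])
  have hΦinj : Function.Injective Φ := by
    intro a b hab
    exact hΨinj (by rw [hΨval, hΨval, hab])
  have hΦsurj : Function.Surjective Φ := by
    rintro ⟨b, hb⟩
    have hle : A ≤ Ψ.range := by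
      apply Algebra.adjoin_le
      intro x hx
      rcases Set.mem_insert_iff.mp hx with rfl | ⟨i, rfl⟩
      · exact ⟨X (Fin.last n), hΨy⟩
      · exact ⟨X i.castSucc, hΨx i⟩
    obtain ⟨p, hp⟩ := hle hb
    exact ⟨p, Subtype.ext hp⟩
  refine ⟨⟨hΦinj, hΦsurj⟩, ?_, ?_⟩
  · -- Part 2 : strict transform
    set K := Ideal.map Φ (Ideal.map (rename (Fin.castSucc : Fin n → Fin (n + 1))) I) with hK
    set Λ := lmap (R := MvPolynomial (Fin n) S) (R' := MvPolynomial (Fin n) S ⧸ I)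
      (Ideal.Quotient.mk I) with hΛ
    set J : Ideal A := RingHom.ker (Λ.comp A.val.toRingHom) with hJ
    have hJmem : ∀ x : A, x ∈ J ↔ ∀ d : ℤ,
        ((x : LaurentPolynomial (MvPolynomial (Fin n) S)).coeff d) ∈ I := by
      intro x
      rw [hJ, RingHom.mem_ker]
      constructor
      · intro h d
        have h2 : (Λ (↑x)).coeff d = 0 := by
          rw [show Λ ((x : LaurentPolynomial (MvPolynomial (Fin n) S))) =
            (Λ.comp A.val.toRingHom) x from rfl, h]
          rfl
        rw [lmap_apply] at h2
        exact (Ideal.Quotient.eq_zero_iff_mem).mp h2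
      · intro h
        have : Λ (↑x) = 0 := by
          apply LaurentPolynomial.ext
          intro d
          rw [lmap_apply]
          exact (Ideal.Quotient.eq_zero_iff_mem).mpr (h d)
        exact this
    have hK_le : K ≤ Ideal.span {x : A | ∃ (a : ℕ) (y : A),
        y ∈ Ideal.span {z : A | ∃ g ∈ I,
          (z : LaurentPolynomial (MvPolynomial (Fin n) S)) = LaurentPolynomial.C g} ∧
        (x : LaurentPolynomial (MvPolynomial (Fin n) S)) =
          T (a : ℤ) * (y : LaurentPolynomial (MvPolynomial (Fin n) S))} := by
      rw [hK, Ideal.map_le_iff_le_comap, Ideal.map_le_iff_le_comap]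
      intro g hg
      rw [Ideal.mem_comap, Ideal.mem_comap]
      have hdecomp : g = ∑ m ∈ (weightedHomogeneousComponent_finsupp (w := w) g).toFinset,
          weightedHomogeneousComponent w m g := by
        rw [← finsum_eq_sum _ (weightedHomogeneousComponent_finsupp (w := w) g),
          sum_weightedHomogeneousComponent]
      rw [hdecomp, map_sum, map_sum]
      apply sum_mem
      intro m _
      apply Ideal.subset_span
      refine ⟨m, ⟨LaurentPolynomial.C (weightedHomogeneousComponent w m g),
        C_mem_adjoin w _⟩, ?_, ?_⟩
      · exact Ideal.subset_span ⟨weightedHomogeneousComponent w m g, hhom g hg m, rfl⟩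
      · rw [← hΨval, hΨrename,
          aeval_weighted_homogeneous w (weightedHomogeneousComponent_isWeightedHomogeneous m g),
          mul_comm]
    have hinner_le : Ideal.span {z : A | ∃ g ∈ I,
          (z : LaurentPolynomial (MvPolynomial (Fin n) S)) = LaurentPolynomial.C g} ≤ J := by
      rw [Ideal.span_le]
      rintro z ⟨g, hg, hz⟩
      have : z ∈ J := by
        rw [hJmem]
        intro d
        rw [hz, LaurentPolynomial.C_apply]
        split_ifs
        · exact hg
        · exact I.zero_mem
      exact this
    have hST_le : Ideal.span {x : A | ∃ (a : ℕ) (y : A),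
        y ∈ Ideal.span {z : A | ∃ g ∈ I,
          (z : LaurentPolynomial (MvPolynomial (Fin n) S)) = LaurentPolynomial.C g} ∧
        (x : LaurentPolynomial (MvPolynomial (Fin n) S)) =
          T (a : ℤ) * (y : LaurentPolynomial (MvPolynomial (Fin n) S))} ≤ J := by
      rw [Ideal.span_le]
      rintro x ⟨a, y, hy, hx⟩
      have hyJ := hinner_le hy
      have : x ∈ J := by
        rw [hJmem]
        intro d
        rw [hx, show (T (a : ℤ) : LaurentPolynomial (MvPolynomial (Fin n) S)) =
            AddMonoidAlgebra.single ((a : ℤ)) (1 : MvPolynomial (Fin n) S) from rfl,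
          AddMonoidAlgebra.coeff_single_mul_apply, one_mul]
        exact (hJmem y).mp hyJ _
      exact this
    have hJ_le : J ≤ K := by
      intro x hx
      have hxc := (hJmem x).mp hx
      have hxsupp : ∀ (d : ℤ) (α : Fin n →₀ ℕ),
          α ∈ (((x : LaurentPolynomial (MvPolynomial (Fin n) S))).coeff d).support →
          d ≤ ((Finsupp.weight w α : ℕ) : ℤ) :=
        fun d α h => mem_adjoin_coeff_support w x.2 d α h
      have hkey : ∀ (d : ℤ) (c : MvPolynomial (Fin n) S), c ∈ I →
          (∀ α ∈ c.support, d ≤ ((Finsupp.weight w α : ℕ) : ℤ)) →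
          ∀ u : A, (u : LaurentPolynomial (MvPolynomial (Fin n) S)) = AddMonoidAlgebra.single d c →
          u ∈ K := by
        intro d c hc hcs u hu
        have hcompsupp : ∀ m : ℕ, (weightedHomogeneousComponent w m c).support ⊆ c.support := by
          intro m α hα
          rw [MvPolynomial.mem_support_iff, coeff_weightedHomogeneousComponent] at hα
          rw [MvPolynomial.mem_support_iff]
          intro h0
          apply hα
          split_ifs <;> simp [h0]
        have humem : ∀ m : ℕ,
            (AddMonoidAlgebra.single d (weightedHomogeneousComponent w m c) :
              LaurentPolynomial (MvPolynomial (Fin n) S)) ∈ A := by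
          intro m
          rw [single_eq_C_mul_T]
          exact C_mul_T_mem w d _ (fun α hα => hcs α (hcompsupp m hα))
        have hTmem : (T (-1) : LaurentPolynomial (MvPolynomial (Fin n) S)) ∈ A :=
          Algebra.subset_adjoin (Set.mem_insert _ _)
        have hu_eq : u = ∑ m ∈ (weightedHomogeneousComponent_finsupp (w := w) c).toFinset,
            (⟨AddMonoidAlgebra.single d (weightedHomogeneousComponent w m c), humem m⟩ : A) := by
          apply Subtype.ext
          rw [show ((∑ m ∈ (weightedHomogeneousComponent_finsupp (w := w) c).toFinset,
              (⟨AddMonoidAlgebra.single d (weightedHomogeneousComponent w m c), humem m⟩ : A) : A) :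
                LaurentPolynomial (MvPolynomial (Fin n) S)) =
              A.val (∑ m ∈ (weightedHomogeneousComponent_finsupp (w := w) c).toFinset,
              (⟨AddMonoidAlgebra.single d (weightedHomogeneousComponent w m c), humem m⟩ : A)) from rfl,
            map_sum, hu]
          have : ∀ m ∈ (weightedHomogeneousComponent_finsupp (w := w) c).toFinset,
              A.val (⟨AddMonoidAlgebra.single d (weightedHomogeneousComponent w m c), humem m⟩ : A) =
              AddMonoidAlgebra.single d (weightedHomogeneousComponent w m c) := fun m _ => rfl
          rw [Finset.sum_congr rfl this, single_finset_sum',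
            ← finsum_eq_sum _ (weightedHomogeneousComponent_finsupp (w := w) c),
            sum_weightedHomogeneousComponent]
        rw [hu_eq]
        apply sum_mem
        intro m hm
        have hm0 : weightedHomogeneousComponent w m c ≠ 0 :=
          (weightedHomogeneousComponent_finsupp (w := w) c).mem_toFinset.mp hm
        have hdm : d ≤ (m : ℤ) := by
          obtain ⟨α, hα⟩ := (MvPolynomial.support_nonempty.mpr hm0)
          have h1 := weightedHomogeneousComponent_isWeightedHomogeneous m c
            (MvPolynomial.mem_support_iff.mp hα)
          have h2 := hcs α (hcompsupp m hα)
          rw [← h1]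
          exact h2
        have hprod : (⟨AddMonoidAlgebra.single d (weightedHomogeneousComponent w m c), humem m⟩ : A) =
            (⟨T (-1), hTmem⟩ : A) ^ ((m : ℤ) - d).toNat *
              Φ (rename (Fin.castSucc : Fin n → Fin (n + 1))
                (weightedHomogeneousComponent w m c)) := by
          apply Subtype.ext
          rw [show (((⟨T (-1), hTmem⟩ : A) ^ ((m : ℤ) - d).toNat *
              Φ (rename (Fin.castSucc : Fin n → Fin (n + 1))
                (weightedHomogeneousComponent w m c)) : A) :
                LaurentPolynomial (MvPolynomial (Fin n) S)) =
              (T (-1) : LaurentPolynomial (MvPolynomial (Fin n) S)) ^ ((m : ℤ) - d).toNat *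
              Ψ (rename (Fin.castSucc : Fin n → Fin (n + 1))
                (weightedHomogeneousComponent w m c)) from rfl,
            hΨrename,
            aeval_weighted_homogeneous w (weightedHomogeneousComponent_isWeightedHomogeneous m c),
            T_neg_one_pow, Int.toNat_of_nonneg (by omega), mul_comm, mul_assoc, ← T_add,
            show ((m : ℤ) + -((m : ℤ) - d)) = d by ring]
          exact single_eq_C_mul_T _ _
        rw [hprod]
        exact Ideal.mul_mem_left _ _
          (Ideal.mem_map_of_mem Φ (Ideal.mem_map_of_mem _ (hhom c hc m)))
      have hxd : ∀ d : ℤ,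
          (AddMonoidAlgebra.single d ((x : LaurentPolynomial (MvPolynomial (Fin n) S)).coeff d) :
            LaurentPolynomial (MvPolynomial (Fin n) S)) ∈ A := by
        intro d
        rw [single_eq_C_mul_T]
        exact C_mul_T_mem w d _ (hxsupp d)
      have hx_eq : x = ∑ d ∈ (x : LaurentPolynomial (MvPolynomial (Fin n) S)).coeff.support,
          (⟨AddMonoidAlgebra.single d ((x : LaurentPolynomial (MvPolynomial (Fin n) S)).coeff d), hxd d⟩ : A) := by
        apply Subtype.ext
        rw [show ((∑ d ∈ (x : LaurentPolynomial (MvPolynomial (Fin n) S)).coeff.support,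
            (⟨AddMonoidAlgebra.single d ((x : LaurentPolynomial (MvPolynomial (Fin n) S)).coeff d), hxd d⟩ : A) :
              A) : LaurentPolynomial (MvPolynomial (Fin n) S)) =
            A.val (∑ d ∈ (x : LaurentPolynomial (MvPolynomial (Fin n) S)).coeff.support,
            (⟨AddMonoidAlgebra.single d ((x : LaurentPolynomial (MvPolynomial (Fin n) S)).coeff d), hxd d⟩ : A))
              from rfl, map_sum]
        have : ∀ d ∈ (x : LaurentPolynomial (MvPolynomial (Fin n) S)).coeff.support,
            A.val (⟨AddMonoidAlgebra.single d ((x : LaurentPolynomial (MvPolynomial (Fin n) S)).coeff d),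
              hxd d⟩ : A) =
            AddMonoidAlgebra.single d ((x : LaurentPolynomial (MvPolynomial (Fin n) S)).coeff d) :=
          fun d _ => rfl
        rw [Finset.sum_congr rfl this]
        exact (AddMonoidAlgebra.sum_coeff_single (x : LaurentPolynomial (MvPolynomial (Fin n) S))).symm
      rw [hx_eq]
      exact sum_mem (fun d _ => hkey d _ (hxc d) (hxsupp d) _ rfl)
    exact le_antisymm hK_le (le_trans hST_le hJ_le)
  · -- Part 3 : the vertex
    rw [Ideal.map_span]
    congr 1
    ext x
    constructor
    · rintro ⟨_, ⟨i, rfl⟩, rfl⟩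
      exact ⟨i, hΦx i⟩
    · rintro ⟨i, hx⟩
      exact ⟨X i.castSucc, ⟨i, rfl⟩, Subtype.ext ((hΦx i).trans hx.symm)⟩
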